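/- Almost surely, for every t ∈ {1,…,n₁}, the martingale increment satisfies D_t = E[f(S₁) | F_t] − E[f(S₁) | F_{t−1}] = −α_t · (1/(m_t − 1)) Σ_{j ∈ R_{t−1}∖{Π(t)}} [ binom(m_t − 2, ℓ_t − 1)^{−1} Σ_{T ⊆ R_{t−1}∖{Π(t), j}, |T| = ℓ_t − 1} Δ_{Π(t), j} f( S^past_{t−1} ∪ {Π(t)} ∪ T ) ], where α_t = (m_t − ℓ_t)/m_t = n₀/(n − t + 1) ∈ (0,1); that is, the increment is −α_t times the conditional average, over a uniform competitor J in R_{t−1}∖{Π(t)} and a uniform completion set T of size ℓ_t − 1 from R_{t−1}∖{Π(t),J}, of the one-swap sensitivity Δ_{Π(t),J} f evaluated at the proxy set S^past_{t−1} ∪ {Π(t)} ∪ T. -/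

import Mathlib

open MeasureTheory Finset

noncomputable section

/-- Everything on the (finite) permutation space is measurable. -/
instance permMeasurableSpace (n : ℕ) : MeasurableSpace (Equiv.Perm (Fin n)) := ⊤

/-- The uniform probability measure on permutations of `{1,…,n}` (complete randomization). -/
def unifPerm (n : ℕ) : Measure (Equiv.Perm (Fin n)) :=
  ((Fintype.card (Equiv.Perm (Fin n)) : ENNReal))⁻¹ • Measure.count

/-- The set `{Π(1),…,Π(k)}` of the first `k` revealed units. -/
def Spast (n k : ℕ) (π : Equiv.Perm (Fin n)) : Finset (Fin n) :=
  (Finset.univ : Finset (Fin (min k n))).image fun i => π (Fin.castLE (min_le_right k n) i)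

/-- The assignment-exposure σ-algebra `F_t = σ(Π(1),…,Π(t))`. -/
def revealF (n : ℕ) (t : ℕ) : MeasurableSpace (Equiv.Perm (Fin n)) :=
  MeasurableSpace.comap
    (fun π => fun i : Fin (min t n) => π (Fin.castLE (min_le_right t n) i)) ⊤

/-- The Doob martingale `M_t = E[f(S₁) | F_t]`. -/
def doobM (n n₁ : ℕ) (f : Finset (Fin n) → ℝ) (t : ℕ) : Equiv.Perm (Fin n) → ℝ :=
  (unifPerm n)[fun π => f (Spast n n₁ π)|revealF n t]

/-- Martingale increments `D_t = M_t − M_{t−1}`. -/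
def doobD (n n₁ : ℕ) (f : Finset (Fin n) → ℝ) (t : ℕ) : Equiv.Perm (Fin n) → ℝ :=
  fun π => doobM n n₁ f t π - doobM n n₁ f (t - 1) π

/-- Conditional variance `Var(D_t | F_{t−1}) = E[D_t² | F_{t−1}] − (E[D_t | F_{t−1}])²`. -/
def condVarD (n n₁ : ℕ) (f : Finset (Fin n) → ℝ) (t : ℕ) : Equiv.Perm (Fin n) → ℝ :=
  fun π =>
    ((unifPerm n)[fun ω => doobD n n₁ f t ω ^ 2|revealF n (t - 1)]) π -
      (((unifPerm n)[doobD n n₁ f t|revealF n (t - 1)]) π) ^ 2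

end

/-- One-swap sensitivity `Δ_{ij} f(S) = f((S∖{i}) ∪ {j}) − f(S)`. -/
noncomputable def swapSens {n : ℕ} (f : Finset (Fin n) → ℝ) (i j : Fin n)
    (S : Finset (Fin n)) : ℝ :=
  f (insert j (S.erase i)) - f S

open scoped Classical

namespace Stmt4

variable {n : ℕ}

instance : MeasurableSingletonClass (Equiv.Perm (Fin n)) := ⟨fun _ => trivial⟩

lemma measurableSet_all (s : Set (Equiv.Perm (Fin n))) : MeasurableSet s := trivial

instance : IsProbabilityMeasure (unifPerm n) := by
  constructor
  rw [unifPerm, Measure.smul_apply, Measure.count_apply_finite _ (Set.finite_univ)]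
  have : (Set.finite_univ (α := Equiv.Perm (Fin n))).toFinset.card
      = Fintype.card (Equiv.Perm (Fin n)) := by simp
  rw [smul_eq_mul, this]
  exact ENNReal.inv_mul_cancel (Nat.cast_ne_zero.mpr (Fintype.card_ne_zero (α := Equiv.Perm (Fin n))))
    (ENNReal.natCast_ne_top _)

lemma unifPerm_singleton (x : Equiv.Perm (Fin n)) :
    unifPerm n {x} = ((Fintype.card (Equiv.Perm (Fin n)) : ENNReal))⁻¹ := by
  rw [unifPerm, Measure.smul_apply, Measure.count_singleton, smul_eq_mul, mul_one]

lemma integrable_unifPerm (h : Equiv.Perm (Fin n) → ℝ) : Integrable h (unifPerm n) :=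
  Integrable.of_finite

/-- Integral over a set under `unifPerm` as a finite sum. -/
lemma setIntegral_unifPerm (s : Set (Equiv.Perm (Fin n))) (h : Equiv.Perm (Fin n) → ℝ) :
    ∫ x in s, h x ∂(unifPerm n)
      = (Fintype.card (Equiv.Perm (Fin n)) : ℝ)⁻¹ *
        ∑ π ∈ Finset.univ.filter (fun π => π ∈ s), h π := by
  rw [integral_fintype ((integrable_unifPerm h).restrict)]
  simp only [Measure.real]
  rw [Finset.mul_sum]
  rw [← Finset.sum_filter_add_sum_filter_not Finset.univ (fun π => π ∈ s)]
  have h2 : ∀ π ∈ Finset.univ.filter (fun π => π ∉ s),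
      ((unifPerm n).restrict s {π}).toReal • h π = 0 := by
    intro π hπ
    simp only [Finset.mem_filter] at hπ
    rw [Measure.restrict_apply (measurableSet_all _)]
    have : {π} ∩ s = (∅ : Set (Equiv.Perm (Fin n))) := by
      ext x; simp only [Set.mem_inter_iff, Set.mem_singleton_iff, Set.mem_empty_iff_false,
        iff_false, not_and]
      rintro rfl; exact hπ.2
    rw [this]; simp
  rw [Finset.sum_eq_zero h2, add_zero]
  refine Finset.sum_congr rfl fun π hπ => ?_
  simp only [Finset.mem_filter] at hπ
  rw [Measure.restrict_apply (measurableSet_all _)]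
  have : {π} ∩ s = ({π} : Set (Equiv.Perm (Fin n))) := by
    rw [Set.inter_eq_left]; simpa using hπ.2
  rw [this, unifPerm_singleton, smul_eq_mul]
  congr 1
  rw [ENNReal.toReal_inv]; simp


def proj (n t : ℕ) (π : Equiv.Perm (Fin n)) : Fin (min t n) → Fin n :=
  fun i => π (Fin.castLE (min_le_right t n) i)

lemma Spast_eq_image_proj (t : ℕ) (π : Equiv.Perm (Fin n)) :
    Spast n t π = Finset.univ.image (proj n t π) := rfl

lemma card_Spast {k : ℕ} (hk : k ≤ n) (π : Equiv.Perm (Fin n)) :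
    (Spast n k π).card = k := by
  rw [Spast, Finset.card_image_of_injective _
    (fun a b hab => (Fin.castLE_injective _) (π.injective hab)), Finset.card_univ,
    Fintype.card_fin]
  omega

lemma Spast_comp (k : ℕ) (ρ π : Equiv.Perm (Fin n)) :
    Spast n k (ρ * π) = (Spast n k π).image ρ := by
  rw [Spast, Spast, Finset.image_image]; rfl

lemma mem_Spast {k : ℕ} (π : Equiv.Perm (Fin n)) {x : Fin n} :
    x ∈ Spast n k π ↔ ∃ i : Fin n, i.1 < k ∧ π i = x := by
  simp only [Spast, Finset.mem_image, Finset.mem_univ, true_and]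
  constructor
  · rintro ⟨i, rfl⟩
    exact ⟨Fin.castLE (min_le_right k n) i, lt_of_lt_of_le i.2 (min_le_left k n), rfl⟩
  · rintro ⟨i, hi, rfl⟩
    exact ⟨⟨i.1, lt_min hi i.2⟩, by congr 1⟩

lemma Spast_subset {k k' : ℕ} (h : k ≤ k') (π : Equiv.Perm (Fin n)) :
    Spast n k π ⊆ Spast n k' π := by
  intro x hx
  rw [mem_Spast] at hx ⊢
  obtain ⟨i, hi, rfl⟩ := hx
  exact ⟨i, by omega, rfl⟩

lemma exists_perm_fixing (P : Finset (Fin n)) :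
    ∀ k (S S' : Finset (Fin n)), (S \ S').card = k → S.card = S'.card → P ⊆ S → P ⊆ S' →
      ∃ ρ : Equiv.Perm (Fin n), (∀ x ∈ P, ρ x = x) ∧ S.image ρ = S' := by
  intro k
  induction k with
  | zero =>
    intro S S' hk hcard hPS hPS'
    have hSS' : S = S' := by
      apply Finset.eq_of_subset_of_card_le _ (le_of_eq hcard.symm)
      rw [← Finset.sdiff_eq_empty_iff_subset]
      exact Finset.card_eq_zero.mp hk
    exact ⟨1, fun x _ => rfl, by simpa using hSS'⟩
  | succ k ih =>
    intro S S' hk hcard hPS hPS'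
    have ha : (S \ S').Nonempty := by
      rw [← Finset.card_pos, hk]; omega
    obtain ⟨a, haS⟩ := ha
    have hb : (S' \ S).Nonempty := by
      rw [← Finset.card_pos, Finset.card_sdiff_comm hcard.symm, hk]; omega
    obtain ⟨b, hbS⟩ := hb
    rw [Finset.mem_sdiff] at haS hbS
    have haP : a ∉ P := fun h => haS.2 (hPS' h)
    have hbP : b ∉ P := fun h => hbS.2 (hPS h)
    set S₂ := insert b (S.erase a) with hS₂def
    have hbe : b ∉ S.erase a := fun h => hbS.2 (Finset.mem_of_mem_erase h)
    have hcard₂ : S₂.card = S.card := by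
      rw [hS₂def, Finset.card_insert_of_notMem hbe, Finset.card_erase_of_mem haS.1]
      have : 1 ≤ S.card := Finset.card_pos.mpr ⟨a, haS.1⟩
      omega
    have hPS₂ : P ⊆ S₂ := fun x hx =>
      Finset.mem_insert_of_mem (Finset.mem_erase_of_ne_of_mem
        (fun h => haP (h ▸ hx)) (hPS hx))
    have hsd : S₂ \ S' = (S \ S').erase a := by
      ext x
      simp only [hS₂def, Finset.mem_sdiff, Finset.mem_insert, Finset.mem_erase]
      constructor
      · rintro ⟨h1 | h1, h2⟩
        · exact absurd (h1 ▸ hbS.1) h2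
        · exact ⟨h1.1, h1.2, h2⟩
      · rintro ⟨h1, h2, h3⟩
        exact ⟨Or.inr ⟨h1, h2⟩, h3⟩
    obtain ⟨ρ₂, hρ₂P, hρ₂S⟩ := ih S₂ S'
      (by rw [hsd, Finset.card_erase_of_mem (Finset.mem_sdiff.mpr haS), hk]; omega)
      (hcard₂.trans hcard) hPS₂ hPS'
    refine ⟨ρ₂ * Equiv.swap a b, fun x hx => ?_, ?_⟩
    · have hxa : x ≠ a := fun h => haP (h ▸ hx)
      have hxb : x ≠ b := fun h => hbP (h ▸ hx)
      simp only [Equiv.Perm.mul_apply, Equiv.swap_apply_of_ne_of_ne hxa hxb]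
      exact hρ₂P x hx
    · have himg : S.image (Equiv.swap a b) = S₂ := by
        nth_rewrite 1 [← Finset.insert_erase haS.1]
        rw [Finset.image_insert, Equiv.swap_apply_left, hS₂def]
        congr 1
        rw [show (S.erase a).image (Equiv.swap a b) = (S.erase a).image id from
          Finset.image_congr fun x hx => Equiv.swap_apply_of_ne_of_ne
            (Finset.ne_of_mem_erase hx)
            (fun h => hbS.2 (Finset.mem_of_mem_erase (h ▸ hx)))]
        exact Finset.image_id
      calc S.image (⇑(ρ₂ * Equiv.swap a b)) = (S.image (Equiv.swap a b)).image ρ₂ := by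
            rw [Finset.image_image]; rfl
        _ = S' := by rw [himg, hρ₂S]

/-- Explicit formula for the Doob martingale. -/
noncomputable def Mform (n n₁ t : ℕ) (f : Finset (Fin n) → ℝ) : Equiv.Perm (Fin n) → ℝ :=
  fun π => ((n - t).choose (n₁ - t) : ℝ)⁻¹ *
    ∑ T ∈ Finset.powersetCard (n₁ - t) (Spast n t π)ᶜ, f (Spast n t π ∪ T)

lemma fiber_sum {n₁ t : ℕ} (hn1 : n₁ ≤ n) (ht : t ≤ n₁) (f : Finset (Fin n) → ℝ)
    (v : Fin (min t n) → Fin n) :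
    ∑ π ∈ Finset.univ.filter (fun π => proj n t π = v), f (Spast n n₁ π)
      = ∑ π ∈ Finset.univ.filter (fun π => proj n t π = v), Mform n n₁ t f π := by
  set fiber := Finset.univ.filter (fun π : Equiv.Perm (Fin n) => proj n t π = v) with hfib
  rcases Finset.eq_empty_or_nonempty fiber with he | ⟨π₀, hπ₀⟩
  · rw [he]; simp
  have hv : proj n t π₀ = v := (Finset.mem_filter.mp hπ₀).2
  set P := Spast n t π₀ with hP
  have hPcard : P.card = t := card_Spast (le_trans ht hn1) π₀
  have hfibP : ∀ π ∈ fiber, Spast n t π = P := by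
    intro π hπ
    rw [Spast_eq_image_proj, (Finset.mem_filter.mp hπ).2, ← hv, ← Spast_eq_image_proj]
  have hmemP : ∀ π ∈ fiber, P ⊆ Spast n n₁ π := fun π hπ =>
    (hfibP π hπ) ▸ Spast_subset ht π
  set g : Equiv.Perm (Fin n) → Finset (Fin n) := fun π => Spast n n₁ π \ P with hg
  have hmaps : ∀ π ∈ fiber, g π ∈ Finset.powersetCard (n₁ - t) Pᶜ := by
    intro π hπ
    rw [Finset.mem_powersetCard]
    refine ⟨fun x hx => ?_, ?_⟩
    · rw [Finset.mem_sdiff] at hx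
      exact Finset.mem_compl.mpr hx.2
    · rw [hg, Finset.card_sdiff_of_subset (hmemP π hπ), card_Spast hn1, hPcard]
  have hS₁eq : ∀ π ∈ fiber, Spast n n₁ π = P ∪ g π := fun π hπ =>
    (Finset.union_sdiff_of_subset (hmemP π hπ)).symm
  -- all fibers of `g` over `fiber` have the same cardinality
  have hcount : ∀ T ∈ Finset.powersetCard (n₁ - t) Pᶜ, ∀ T' ∈ Finset.powersetCard (n₁ - t) Pᶜ,
      (fiber.filter (fun π => g π = T)).card = (fiber.filter (fun π => g π = T')).card := by
    intro T hT T' hT'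
    rw [Finset.mem_powersetCard] at hT hT'
    have hdisj : Disjoint P T := Finset.disjoint_left.mpr
      (fun {x} hx hxT => (Finset.mem_compl.mp (hT.1 hxT)) hx)
    have hdisj' : Disjoint P T' := Finset.disjoint_left.mpr
      (fun {x} hx hxT => (Finset.mem_compl.mp (hT'.1 hxT)) hx)
    have hcardPT : (P ∪ T).card = (P ∪ T').card := by
      rw [Finset.card_union_of_disjoint hdisj, Finset.card_union_of_disjoint hdisj',
        hT.2, hT'.2]
    obtain ⟨ρ, hρP, hρS⟩ := exists_perm_fixing P ((P ∪ T) \ (P ∪ T')).card (P ∪ T) (P ∪ T')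
      rfl hcardPT Finset.subset_union_left Finset.subset_union_left
    have hρP' : ∀ x ∈ P, ρ.symm x = x := fun x hx => by
      conv_lhs => rw [← hρP x hx]
      exact ρ.symm_apply_apply x
    have hρS' : (P ∪ T').image ρ.symm = P ∪ T := by
      rw [← hρS, Finset.image_image]
      have : (⇑ρ.symm ∘ ⇑ρ) = id := funext fun x => ρ.symm_apply_apply x
      rw [this, Finset.image_id]
    have key : ∀ (σ : Equiv.Perm (Fin n)), (∀ x ∈ P, σ x = x) →
        ∀ (A B : Finset (Fin n)), Disjoint P B → (P ∪ A).image σ = P ∪ B →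
        ∀ π ∈ fiber.filter (fun π => g π = A), σ * π ∈ fiber.filter (fun π => g π = B) := by
      intro σ hσP A B hPB himg π hπ
      rw [Finset.mem_filter] at hπ
      obtain ⟨hπf, hπg⟩ := hπ
      have hfix : ∀ x ∈ P, σ x = x := hσP
      have hσfib : σ * π ∈ fiber := by
        rw [hfib, Finset.mem_filter]
        refine ⟨Finset.mem_univ _, ?_⟩
        funext i
        have hmem : π (Fin.castLE (min_le_right t n) i) ∈ P := by
          rw [← hfibP π hπf, Spast_eq_image_proj]
          exact Finset.mem_image.mpr ⟨i, Finset.mem_univ _, rfl⟩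
        show σ (π (Fin.castLE (min_le_right t n) i)) = v i
        rw [hfix _ hmem]
        exact congrFun (Finset.mem_filter.mp hπf).2 i
      rw [Finset.mem_filter]
      refine ⟨hσfib, ?_⟩
      have : Spast n n₁ (σ * π) = P ∪ B := by
        rw [Spast_comp, hS₁eq π hπf, hπg, himg]
      rw [hg]
      simp only
      rw [this, Finset.union_sdiff_cancel_left hPB]
    refine Finset.card_bij' (fun π _ => ρ * π) (fun π _ => ρ⁻¹ * π)
      (key ρ hρP T T' hdisj' hρS) (key ρ⁻¹ hρP' T' T hdisj hρS')
      (fun π _ => by ext x; simp) (fun π _ => by ext x; simp)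
  -- main computation
  have hPccard : Pᶜ.card = n - t := by
    rw [Finset.card_compl, hPcard, Fintype.card_fin]
  have hpcne : (Finset.powersetCard (n₁ - t) Pᶜ).Nonempty := by
    rw [← Finset.card_pos, Finset.card_powersetCard, hPccard]
    exact Nat.choose_pos (by omega)
  obtain ⟨T₀, hT₀⟩ := hpcne
  set c := (fiber.filter (fun π => g π = T₀)).card with hc
  have hL : ∑ π ∈ fiber, f (Spast n n₁ π)
      = (c : ℝ) * ∑ T ∈ Finset.powersetCard (n₁ - t) Pᶜ, f (P ∪ T) := by
    rw [← Finset.sum_fiberwise_of_maps_to hmaps (fun π => f (Spast n n₁ π))]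
    rw [Finset.mul_sum]
    refine Finset.sum_congr rfl fun T hT => ?_
    have : ∀ π ∈ fiber.filter (fun π => g π = T), f (Spast n n₁ π) = f (P ∪ T) := by
      intro π hπ
      rw [Finset.mem_filter] at hπ
      rw [hS₁eq π hπ.1, hπ.2]
    rw [Finset.sum_congr rfl this, Finset.sum_const, hcount T hT T₀ hT₀]
    simp [hc, mul_comm]
  have hfibcard : fiber.card = (n - t).choose (n₁ - t) * c := by
    rw [Finset.card_eq_sum_card_fiberwise hmaps]
    rw [Finset.sum_congr rfl (fun T hT => hcount T hT T₀ hT₀), Finset.sum_const,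
      Finset.card_powersetCard, hPccard, smul_eq_mul]
  have hR : ∑ π ∈ fiber, Mform n n₁ t f π
      = (fiber.card : ℝ) * (((n - t).choose (n₁ - t) : ℝ)⁻¹ *
          ∑ T ∈ Finset.powersetCard (n₁ - t) Pᶜ, f (P ∪ T)) := by
    have hcn : ∀ π ∈ fiber, Mform n n₁ t f π = ((n - t).choose (n₁ - t) : ℝ)⁻¹ *
        ∑ T ∈ Finset.powersetCard (n₁ - t) Pᶜ, f (P ∪ T) := by
      intro π hπ
      simp only [Mform, hfibP π hπ]
    rw [Finset.sum_congr rfl hcn, Finset.sum_const, nsmul_eq_mul]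
  rw [hL, hR, hfibcard]
  have hC : ((n - t).choose (n₁ - t) : ℝ) ≠ 0 :=
    Nat.cast_ne_zero.mpr (Nat.choose_pos (by omega)).ne'
  push_cast
  field_simp


lemma Spast_succ {t : ℕ} (ht1 : 1 ≤ t) (ht : t ≤ n) (π : Equiv.Perm (Fin n)) :
    Spast n t π = insert (π ⟨t - 1, by omega⟩) (Spast n (t - 1) π) := by
  ext x
  rw [mem_Spast π, Finset.mem_insert, mem_Spast π]
  constructor
  · rintro ⟨i, hi, rfl⟩
    rcases eq_or_lt_of_le (Nat.lt_succ_iff.mp (by omega : i.1 < (t - 1) + 1)) with h | h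
    · left; congr 1; exact Fin.ext (by simpa using h)
    · right; exact ⟨i, h, rfl⟩
  · rintro (rfl | ⟨i, hi, rfl⟩)
    · exact ⟨_, by simp; omega, rfl⟩
    · exact ⟨i, by omega, rfl⟩

lemma not_mem_Spast_pred {t : ℕ} (ht1 : 1 ≤ t) (ht : t ≤ n) (π : Equiv.Perm (Fin n)) :
    π ⟨t - 1, by omega⟩ ∉ Spast n (t - 1) π := by
  rw [mem_Spast π]
  rintro ⟨i, hi, hπ⟩
  have := π.injective hπ
  rw [Fin.ext_iff] at this
  simp at this
  omega


lemma doobM_ae_eq {n₁ t : ℕ} (hn1 : n₁ ≤ n) (ht : t ≤ n₁) (f : Finset (Fin n) → ℝ) :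
    doobM n n₁ f t =ᵐ[unifPerm n] Mform n n₁ t f := by
  rw [doobM]
  refine (ae_eq_condExp_of_forall_setIntegral_eq (le_top : revealF n t ≤ ⊤)
    (integrable_unifPerm _) (fun s _ _ => (integrable_unifPerm _).integrableOn)
    ?_ ?_).symm
  · intro s hs _
    obtain ⟨A, -, rfl⟩ := MeasurableSpace.measurableSet_comap.mp hs
    rw [setIntegral_unifPerm, setIntegral_unifPerm]
    congr 1
    have hfilter : (Finset.univ.filter
        (fun π : Equiv.Perm (Fin n) => π ∈ (fun π => fun i : Fin (min t n) =>
          π (Fin.castLE (min_le_right t n) i)) ⁻¹' A))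
        = Finset.univ.filter (fun π => proj n t π ∈ A) :=
      Finset.filter_congr fun π _ => Iff.rfl
    rw [hfilter]
    rw [← Finset.sum_fiberwise_of_maps_to (g := proj n t)
      (fun π _ => Finset.mem_univ (proj n t π)) (fun π => Mform n n₁ t f π),
      ← Finset.sum_fiberwise_of_maps_to (g := proj n t)
      (fun π _ => Finset.mem_univ (proj n t π)) (fun π => f (Spast n n₁ π))]
    refine Finset.sum_congr rfl fun v _ => ?_
    by_cases hvA : v ∈ A
    · have h1 : (Finset.univ.filter (fun π => proj n t π ∈ A)).filter
          (fun π => proj n t π = v) = Finset.univ.filter (fun π => proj n t π = v) := by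
        ext π
        simp only [Finset.mem_filter, Finset.mem_univ, true_and]
        exact ⟨fun h => h.2, fun h => ⟨h ▸ hvA, h⟩⟩
      rw [h1]
      exact (fiber_sum hn1 ht f v).symm
    · have h1 : (Finset.univ.filter (fun π => proj n t π ∈ A)).filter
          (fun π => proj n t π = v) = ∅ := by
        ext π
        simp only [Finset.mem_filter, Finset.mem_univ, true_and,
          Finset.notMem_empty, iff_false, not_and]
        intro h1 h2
        exact hvA (h2 ▸ h1)
      rw [h1]
      simp
  · refine ⟨Mform n n₁ t f, ?_, Filter.EventuallyEq.rfl⟩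
    have hM : @Measurable _ _ (revealF n t) _ (Mform n n₁ t f) := by
      have heq : Mform n n₁ t f = (fun v : Fin (min t n) → Fin n =>
          ((n - t).choose (n₁ - t) : ℝ)⁻¹ *
            ∑ T ∈ Finset.powersetCard (n₁ - t) (Finset.univ.image v)ᶜ,
              f (Finset.univ.image v ∪ T)) ∘ (fun π => fun i : Fin (min t n) =>
          π (Fin.castLE (min_le_right t n) i)) := rfl
      rw [heq, revealF]
      exact Measurable.comp measurable_from_top (comap_measurable _)
    exact hM.stronglyMeasurable


section Sums
variable {α : Type*} [DecidableEq α]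

lemma sum_erase_powersetCard_const (s : Finset α) (k : ℕ) (h : Finset α → ℝ) :
    ∑ j ∈ s, ∑ T ∈ Finset.powersetCard k (s.erase j), h T
      = ((s.card - k : ℕ) : ℝ) * ∑ T ∈ Finset.powersetCard k s, h T := by
  have hpc : ∀ j ∈ s, Finset.powersetCard k (s.erase j)
      = (Finset.powersetCard k s).filter (fun T => j ∉ T) := by
    intro j hj
    ext T
    simp only [Finset.mem_powersetCard, Finset.mem_filter, Finset.subset_erase]
    tauto
  rw [Finset.sum_congr rfl fun j hj => by rw [hpc j hj, Finset.sum_filter]]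
  rw [Finset.sum_comm]
  rw [Finset.mul_sum]
  refine Finset.sum_congr rfl fun T hT => ?_
  rw [← Finset.sum_filter]
  rw [Finset.sum_const]
  have : (s.filter (fun j => j ∉ T)) = s \ T := (Finset.sdiff_eq_filter s T).symm
  rw [this]
  rw [Finset.mem_powersetCard] at hT
  rw [Finset.card_sdiff_of_subset hT.1, hT.2, nsmul_eq_mul]

lemma sum_insert_powersetCard (s : Finset α) (k : ℕ) (h : Finset α → ℝ) :
    ∑ j ∈ s, ∑ T ∈ Finset.powersetCard k (s.erase j), h (insert j T)
      = ((k + 1 : ℕ) : ℝ) * ∑ U ∈ Finset.powersetCard (k + 1) s, h U := by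
  have hR : ((k + 1 : ℕ) : ℝ) * ∑ U ∈ Finset.powersetCard (k + 1) s, h U
      = ∑ U ∈ Finset.powersetCard (k + 1) s, ∑ _j ∈ U, h U := by
    rw [Finset.mul_sum]
    refine Finset.sum_congr rfl fun U hU => ?_
    rw [Finset.sum_const, (Finset.mem_powersetCard.mp hU).2, nsmul_eq_mul]
  rw [hR, Finset.sum_sigma', Finset.sum_sigma']
  refine Finset.sum_nbij' (fun x => ⟨insert x.1 x.2, x.1⟩) (fun y => ⟨y.2, y.1.erase y.2⟩)
    ?_ ?_ ?_ ?_ ?_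
  · rintro ⟨j, T⟩ hx
    simp only [Finset.mem_sigma] at hx ⊢
    obtain ⟨hj, hT⟩ := hx
    rw [Finset.mem_powersetCard] at hT
    have hjT : j ∉ T := fun hh => (Finset.notMem_erase j s) (hT.1 hh)
    refine ⟨Finset.mem_powersetCard.mpr ⟨?_, ?_⟩, Finset.mem_insert_self _ _⟩
    · exact Finset.insert_subset hj (hT.1.trans (Finset.erase_subset _ _))
    · rw [Finset.card_insert_of_notMem hjT, hT.2]
  · rintro ⟨U, j⟩ hy
    simp only [Finset.mem_sigma] at hy ⊢
    obtain ⟨hU, hj⟩ := hy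
    rw [Finset.mem_powersetCard] at hU
    refine ⟨hU.1 hj, Finset.mem_powersetCard.mpr ⟨?_, ?_⟩⟩
    · rw [Finset.subset_erase]
      exact ⟨(Finset.erase_subset _ _).trans hU.1, Finset.notMem_erase _ _⟩
    · rw [Finset.card_erase_of_mem hj, hU.2]; omega
  · rintro ⟨j, T⟩ hx
    simp only [Finset.mem_sigma] at hx
    obtain ⟨hj, hT⟩ := hx
    rw [Finset.mem_powersetCard] at hT
    have hjT : j ∉ T := fun hh => (Finset.notMem_erase j s) (hT.1 hh)
    simp [Finset.erase_insert hjT]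
  · rintro ⟨U, j⟩ hy
    simp only [Finset.mem_sigma] at hy
    simp [Finset.insert_erase hy.2]
  · rintro ⟨j, T⟩ _
    rfl

end Sums

set_option maxHeartbeats 2000000 in
lemma Mform_diff {n₁ t : ℕ} (hn : 2 ≤ n) (h2 : n₁ ≤ n - 1)
    (ht1 : 1 ≤ t) (ht2 : t ≤ n₁) (f : Finset (Fin n) → ℝ) (π : Equiv.Perm (Fin n))
    (hlt : t - 1 < n) :
    Mform n n₁ t f π - Mform n n₁ (t - 1) f π =
      -(((n - n₁ : ℕ) : ℝ) / ((n - t + 1 : ℕ) : ℝ)) *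
          ((((n - t + 1 - 1 : ℕ)) : ℝ)⁻¹ *
            ∑ j ∈ ((Spast n (t - 1) π)ᶜ).erase (π ⟨t - 1, hlt⟩),
              ((Nat.choose (n - t + 1 - 2) (n₁ - t + 1 - 1) : ℝ)⁻¹ *
                ∑ T ∈ Finset.powersetCard (n₁ - t + 1 - 1)
                    ((((Spast n (t - 1) π)ᶜ).erase (π ⟨t - 1, hlt⟩)).erase j),
                  swapSens f (π ⟨t - 1, hlt⟩) j
                    (insert (π ⟨t - 1, hlt⟩) (Spast n (t - 1) π) ∪ T))) := by
  have htn : t ≤ n := by omega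
  set i := π ⟨t - 1, hlt⟩ with hi
  set P := Spast n (t - 1) π with hPdef
  have hiP : i ∉ P := not_mem_Spast_pred ht1 htn π
  have hPcard : P.card = t - 1 := card_Spast (by omega) π
  set s := Pᶜ.erase i with hsdef
  have hiPc : i ∈ Pᶜ := Finset.mem_compl.mpr hiP
  have hscard : s.card = n - t := by
    rw [hsdef, Finset.card_erase_of_mem hiPc, Finset.card_compl, hPcard, Fintype.card_fin]
    omega
  have hSp : Spast n t π = insert i P := Spast_succ ht1 htn π
  have hSpc : (Spast n t π)ᶜ = s := by rw [hSp, Finset.compl_insert]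
  have his : i ∉ s := Finset.notMem_erase _ _
  -- natural number simplifications in the goal
  have e1 : n - t + 1 - 1 = n - t := by omega
  have e2 : n - t + 1 - 2 = n - t - 1 := by omega
  have e3 : n₁ - t + 1 - 1 = n₁ - t := by omega
  have e4 : n - (t - 1) = n - t + 1 := by omega
  have e5 : n₁ - (t - 1) = n₁ - t + 1 := by omega
  rw [e1, e2, e3]
  simp only [Mform, hSpc, hSp, hPdef.symm, e4, e5]
  rw [show (insert i P)ᶜ = s from by rw [Finset.compl_insert]]
  -- abbreviations
  set A := ∑ U ∈ Finset.powersetCard (n₁ - t + 1) s, f (P ∪ U) with hA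
  set B := ∑ T ∈ Finset.powersetCard (n₁ - t) s, f (insert i (P ∪ T)) with hB
  -- left side pieces
  have hterm1 : ∑ T ∈ Finset.powersetCard (n₁ - t) s, f (insert i P ∪ T) = B := by
    refine Finset.sum_congr rfl fun T _ => ?_
    rw [Finset.insert_union]
  have hPc_eq : Pᶜ = insert i s := (Finset.insert_erase hiPc).symm
  have hterm2 : ∑ U ∈ Finset.powersetCard (n₁ - t + 1) Pᶜ, f (P ∪ U) = A + B := by
    rw [hPc_eq, Finset.powersetCard_succ_insert his]
    rw [Finset.sum_union]
    · congr 1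
      rw [Finset.sum_image]
      · refine Finset.sum_congr rfl fun T _ => ?_
        rw [Finset.union_insert]
      · intro T hT T' hT' hins
        have hiT : i ∉ T := fun hh =>
          his ((Finset.mem_powersetCard.mp hT).1 hh)
        have hiT' : i ∉ T' := fun hh =>
          his ((Finset.mem_powersetCard.mp hT').1 hh)
        rw [← Finset.erase_insert hiT, ← Finset.erase_insert hiT', hins]
    · rw [Finset.disjoint_left]
      intro U hU hU'
      obtain ⟨T, hT, rfl⟩ := Finset.mem_image.mp hU'
      exact his ((Finset.mem_powersetCard.mp hU).1 (Finset.mem_insert_self i T))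
  -- right side pieces
  have hswap : ∀ j ∈ s, ∀ T ∈ Finset.powersetCard (n₁ - t) (s.erase j),
      swapSens f i j (insert i P ∪ T) = f (P ∪ insert j T) - f (insert i (P ∪ T)) := by
    intro j hj T hT
    have hiT : i ∉ T := fun hh =>
      his (Finset.erase_subset _ _ ((Finset.mem_powersetCard.mp hT).1 hh))
    have hiPT : i ∉ P ∪ T := by
      rw [Finset.mem_union]; rintro (h | h); exacts [hiP h, hiT h]
    rw [swapSens, Finset.insert_union, Finset.erase_insert hiPT, Finset.union_insert]
  have hE2 : ∑ j ∈ s, ∑ T ∈ Finset.powersetCard (n₁ - t) (s.erase j), f (P ∪ insert j T)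
      = ((n₁ - t + 1 : ℕ) : ℝ) * A :=
    sum_insert_powersetCard s (n₁ - t) (fun U => f (P ∪ U))
  have hE1 : ∑ j ∈ s, ∑ T ∈ Finset.powersetCard (n₁ - t) (s.erase j), f (insert i (P ∪ T))
      = ((n - n₁ : ℕ) : ℝ) * B := by
    rw [sum_erase_powersetCard_const s (n₁ - t) (fun T => f (insert i (P ∪ T)))]
    rw [hscard]
    congr 2
    omega
  have hRHS : ∑ j ∈ s, (((n - t - 1).choose (n₁ - t) : ℝ)⁻¹ *
        ∑ T ∈ Finset.powersetCard (n₁ - t) (s.erase j),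
          swapSens f i j (insert i P ∪ T))
      = ((n - t - 1).choose (n₁ - t) : ℝ)⁻¹ *
          (((n₁ - t + 1 : ℕ) : ℝ) * A - ((n - n₁ : ℕ) : ℝ) * B) := by
    rw [← Finset.mul_sum]
    congr 1
    rw [← hE2, ← hE1, ← Finset.sum_sub_distrib]
    refine Finset.sum_congr rfl fun j hj => ?_
    rw [← Finset.sum_sub_distrib]
    exact Finset.sum_congr rfl fun T hT => hswap j hj T hT
  rw [hterm1, hterm2, hRHS]
  -- final arithmetic
  have hb : 0 < (n - t).choose (n₁ - t) := Nat.choose_pos (by omega)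
  have ha : 0 < (n - t - 1).choose (n₁ - t) := Nat.choose_pos (by omega)
  have hd : 0 < (n - t + 1).choose (n₁ - t + 1) := Nat.choose_pos (by omega)
  -- binomial identities
  have i2 : (n - t) * ((n - t - 1).choose (n₁ - t))
      = (n - t).choose (n₁ - t + 1) * (n₁ - t + 1) := by
    have h := Nat.add_one_mul_choose_eq (n - t - 1) (n₁ - t)
    have : n - t - 1 + 1 = n - t := by omega
    rwa [this] at h
  have i3 : (n - t).choose (n₁ - t + 1) * (n₁ - t + 1)
      = (n - t).choose (n₁ - t) * (n - n₁) := by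
    have h := Nat.choose_succ_right_eq (n - t) (n₁ - t)
    have : n - t - (n₁ - t) = n - n₁ := by omega
    rwa [this] at h
  have i4 : (n - t + 1).choose (n₁ - t + 1)
      = (n - t).choose (n₁ - t) + (n - t).choose (n₁ - t + 1) :=
    Nat.choose_succ_succ' (n - t) (n₁ - t)
  have i1 : (n - t + 1) * ((n - t).choose (n₁ - t))
      = (n - t + 1).choose (n₁ - t + 1) * (n₁ - t + 1) := by
    have h := Nat.add_one_mul_choose_eq (n - t) (n₁ - t)
    exact h
  -- cast to ℝ
  have hbR : ((n - t).choose (n₁ - t) : ℝ) ≠ 0 := Nat.cast_ne_zero.mpr hb.ne'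
  have haR : ((n - t - 1).choose (n₁ - t) : ℝ) ≠ 0 := Nat.cast_ne_zero.mpr ha.ne'
  have hdR : ((n - t + 1).choose (n₁ - t + 1) : ℝ) ≠ 0 := Nat.cast_ne_zero.mpr hd.ne'
  have hmR : ((n - t + 1 : ℕ) : ℝ) ≠ 0 := Nat.cast_ne_zero.mpr (by omega)
  have hntR : ((n - t : ℕ) : ℝ) ≠ 0 := Nat.cast_ne_zero.mpr (by omega)
  have i1R : ((n - t + 1 : ℕ) : ℝ) * ((n - t).choose (n₁ - t) : ℝ)
      = ((n - t + 1).choose (n₁ - t + 1) : ℝ) * ((n₁ - t + 1 : ℕ) : ℝ) := by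
    exact_mod_cast congrArg (Nat.cast (R := ℝ)) i1
  have i2R : ((n - t : ℕ) : ℝ) * ((n - t - 1).choose (n₁ - t) : ℝ)
      = ((n - t).choose (n₁ - t + 1) : ℝ) * ((n₁ - t + 1 : ℕ) : ℝ) := by
    exact_mod_cast congrArg (Nat.cast (R := ℝ)) i2
  have i3R : ((n - t).choose (n₁ - t + 1) : ℝ) * ((n₁ - t + 1 : ℕ) : ℝ)
      = ((n - t).choose (n₁ - t) : ℝ) * ((n - n₁ : ℕ) : ℝ) := by
    exact_mod_cast congrArg (Nat.cast (R := ℝ)) i3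
  have i4R : ((n - t + 1).choose (n₁ - t + 1) : ℝ)
      = ((n - t).choose (n₁ - t) : ℝ) + ((n - t).choose (n₁ - t + 1) : ℝ) := by
    exact_mod_cast congrArg (Nat.cast (R := ℝ)) i4
  set a : ℝ := ((n - t - 1).choose (n₁ - t) : ℝ)
  set b : ℝ := ((n - t).choose (n₁ - t) : ℝ)
  set c : ℝ := ((n - t).choose (n₁ - t + 1) : ℝ)
  set d : ℝ := ((n - t + 1).choose (n₁ - t + 1) : ℝ)
  set q : ℝ := ((n - n₁ : ℕ) : ℝ) with hq
  set m : ℝ := ((n - t + 1 : ℕ) : ℝ) with hm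
  set nt : ℝ := ((n - t : ℕ) : ℝ) with hnt
  set l : ℝ := ((n₁ - t + 1 : ℕ) : ℝ) with hl
  have hqR : q ≠ 0 := Nat.cast_ne_zero.mpr (by omega)
  have hlR : l ≠ 0 := Nat.cast_ne_zero.mpr (by omega)
  have hlq : l + q ≠ 0 := by positivity
  have ha3 : a = b * q / nt := by
    rw [eq_div_iff hntR]
    linear_combination i2R + i3R
  have hd3 : d = b * (l + q) / l := by
    rw [eq_div_iff hlR]
    linear_combination l * i4R + i3R
  have hm2 : m = l + q := by
    rw [hm, hl, hq]
    have : (n - t + 1 : ℕ) = (n₁ - t + 1) + (n - n₁) := by omega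
    exact_mod_cast congrArg (Nat.cast (R := ℝ)) this
  rw [ha3, hd3, hm2]
  field_simp
  ring


end Stmt4

/-- reveal–swap representation of the Doob martingale increment: a.s., for every
`1 ≤ t ≤ n₁`, `D_t` equals `−α_t` times the average (over a uniform competitor `J` in
`R_{t−1}∖{Π(t)}` and a uniform completion set `T`) of the one-swap sensitivity at the proxy
set, with `α_t = (m_t − ℓ_t)/m_t = n₀/(n − t + 1) ∈ (0,1)`. -/
theorem stmt4 {n n₁ : ℕ} (hn : 2 ≤ n) (h1 : 1 ≤ n₁) (h2 : n₁ ≤ n - 1)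
    (f : Finset (Fin n) → ℝ) :
    ∀ᵐ π ∂(unifPerm n), ∀ (t : ℕ) (ht1 : 1 ≤ t) (ht2 : t ≤ n₁),
      (0 : ℝ) < ((n - n₁ : ℕ) : ℝ) / ((n - t + 1 : ℕ) : ℝ) ∧
      ((n - n₁ : ℕ) : ℝ) / ((n - t + 1 : ℕ) : ℝ) < 1 ∧
      (((n - t + 1) - (n₁ - t + 1) : ℕ) : ℝ) / ((n - t + 1 : ℕ) : ℝ)
        = ((n - n₁ : ℕ) : ℝ) / ((n - t + 1 : ℕ) : ℝ) ∧
      doobD n n₁ f t π =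
        -(((n - n₁ : ℕ) : ℝ) / ((n - t + 1 : ℕ) : ℝ)) *
          ((((n - t + 1 - 1 : ℕ)) : ℝ)⁻¹ *
            ∑ j ∈ ((Spast n (t - 1) π)ᶜ).erase (π ⟨t - 1, by omega⟩),
              ((Nat.choose (n - t + 1 - 2) (n₁ - t + 1 - 1) : ℝ)⁻¹ *
                ∑ T ∈ Finset.powersetCard (n₁ - t + 1 - 1)
                    ((((Spast n (t - 1) π)ᶜ).erase (π ⟨t - 1, by omega⟩)).erase j),
                  swapSens f (π ⟨t - 1, by omega⟩) j
                    (insert (π ⟨t - 1, by omega⟩) (Spast n (t - 1) π) ∪ T))) := by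
  have hn1 : n₁ ≤ n := by omega
  have hae : ∀ᵐ π ∂(unifPerm n), ∀ t, t ≤ n₁ →
      doobM n n₁ f t π = Stmt4.Mform n n₁ t f π := by
    rw [MeasureTheory.ae_all_iff]
    intro t
    by_cases ht : t ≤ n₁
    · filter_upwards [Stmt4.doobM_ae_eq hn1 ht f] with π h _
      exact h
    · exact Filter.Eventually.of_forall (fun π h => absurd h ht)
  filter_upwards [hae] with π hπ
  intro t ht1 ht2
  refine ⟨?_, ?_, ?_, ?_⟩
  · exact div_pos (Nat.cast_pos.mpr (by omega)) (Nat.cast_pos.mpr (by omega))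
  · rw [div_lt_one (Nat.cast_pos.mpr (by omega))]
    exact Nat.cast_lt.mpr (by omega)
  · have h : (n - t + 1) - (n₁ - t + 1) = n - n₁ := by omega
    rw [h]
  · rw [doobD, hπ t ht2, hπ (t - 1) (by omega)]
    exact Stmt4.Mform_diff hn h2 ht1 ht2 f π (by omega)
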